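/- Let Ω ⊆ R^n be a bounded domain with a tree covering {U_t}_{t∈Γ}: the U_t are open, cover Ω up to a null set, Σ_t χ_{U_t} ≤ N, Γ carries a rooted tree structure with root a, and there are pairwise disjoint open cubes B_t ⊆ U_t ∩ U_{t_p} for each non-root t (t_p denoting the parent). Then for every g ∈ L^1(Ω) with ∫_Ω g = 0 whose support intersects only finitely many U_t, there exist functions g_t ∈ L^1(Ω), all but finitely many zero, with g = Σ_t g_t, supp(g_t) ⊆ U_t, and ∫_{U_t} g_t = 0 for every t. -/

import Mathlib

open MeasureTheory Metric Set ENNReal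

private lemma tc_nocycle {Γ : Type*} (parent : Γ → Γ) (a : Γ) (hroot : parent a = a)
    {t : Γ} (k : ℕ) (hk : parent^[k] t = a) {m : ℕ} (hm : parent^[m + 1] t = t) : t = a := by
  have hj : ∀ j, parent^[(m + 1) * j] t = t := by
    intro j
    induction j with
    | zero => simp
    | succ j ih =>
      have h : (m + 1) * (j + 1) = (m + 1) + (m + 1) * j := by ring
      rw [h, Function.iterate_add_apply, ih, hm]
  have h1 : parent^[(m + 1) * k] t = t := hj k
  have hle : k ≤ (m + 1) * k := Nat.le_mul_of_pos_left k (Nat.succ_pos m)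
  have h2 : (m + 1) * k = ((m + 1) * k - k) + k := by omega
  have h3 : parent^[(m + 1) * k] t = parent^[(m + 1) * k - k] (parent^[k] t) := by
    conv_lhs => rw [h2]
    rw [Function.iterate_add_apply]
  rw [hk, Function.iterate_fixed hroot] at h3
  rw [h1] at h3
  exact h3

/-- Existence part of Theorem 2.5 of the paper: given a tree covering `{U_t}` of `Ω`
(with root `a`, parent map `parent`, and pairwise disjoint open cubes
`B_t ⊆ U_t ∩ U_{t_p}`), every mean-zero `g ∈ L¹(Ω)` whose support meets only finitely
many `U_t` admits a finite `C`-orthogonal decomposition `g = Σ_t g_t` with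
`supp g_t ⊆ U_t` and `∫_{U_t} g_t = 0`. -/
theorem tree_covering_decomposition
    (n : ℕ) (hn : 1 ≤ n) (Ω : Set (EuclideanSpace ℝ (Fin n)))
    (hΩopen : IsOpen Ω) (hΩconn : IsConnected Ω) (hΩbdd : Bornology.IsBounded Ω)
    (Γ : Type*) [Countable Γ] (U : Γ → Set (EuclideanSpace ℝ (Fin n)))
    (hUopen : ∀ t, IsOpen (U t)) (hUΩ : ∀ t, U t ⊆ Ω)
    (hcover : volume (Ω \ ⋃ t, U t) = 0)
    (N : ℕ) (hN : 1 ≤ N)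
    (hoverlap : ∀ x, ∑' t, (U t).indicator (fun _ => (1 : ℝ≥0∞)) x ≤ N)
    (hfinint : ∀ t, {s | (U t ∩ U s).Nonempty}.Finite)
    (a : Γ) (parent : Γ → Γ) (hroot : parent a = a)
    (htree : ∀ t, ∃ k : ℕ, parent^[k] t = a)
    (B : Γ → Set (EuclideanSpace ℝ (Fin n)))
    (hBcube : ∀ t, t ≠ a → ∃ (c : EuclideanSpace ℝ (Fin n)) (L : ℝ), 0 < L ∧
      B t = {x | ∀ i, |x i - c i| < L / 2})
    (hBsub : ∀ t, t ≠ a → B t ⊆ U t ∩ U (parent t))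
    (hBdisj : Pairwise (Function.onFun Disjoint B)) :
    ∀ g : EuclideanSpace ℝ (Fin n) → ℝ,
      IntegrableOn g Ω volume → (∫ x in Ω, g x) = 0 →
      {t | (Function.support g ∩ U t).Nonempty}.Finite →
      ∃ gt : Γ → EuclideanSpace ℝ (Fin n) → ℝ,
        {t | gt t ≠ 0}.Finite ∧
        (∀ t, IntegrableOn (gt t) Ω volume) ∧
        (∀ᵐ x ∂(volume.restrict Ω), g x = ∑' t, gt t x) ∧
        (∀ t, Function.support (gt t) ⊆ U t) ∧
        (∀ t, (∫ x in U t, gt t x) = 0) := by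
  classical
  intro g hg hg0 hFfin
  obtain ⟨e, he⟩ := exists_injective_nat Γ
  -- measurable partition refining the cover
  set V : Γ → Set (EuclideanSpace ℝ (Fin n)) :=
    fun t => U t \ ⋃ (s : Γ) (_ : e s < e t), U s with hVdef
  have hVsub : ∀ t, V t ⊆ U t := fun t => diff_subset
  have hVmeas : ∀ t, MeasurableSet (V t) := fun t =>
    (hUopen t).measurableSet.diff
      (MeasurableSet.iUnion fun s => MeasurableSet.iUnion fun _ => (hUopen s).measurableSet)
  have hVdisj : ∀ s t, s ≠ t → ∀ x, x ∈ V s → x ∈ V t → False := by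
    intro s t hst x hxs hxt
    rcases (Nat.lt_or_ge (e s) (e t)) with h | h
    · exact hxt.2 (mem_iUnion.2 ⟨s, mem_iUnion.2 ⟨h, hxs.1⟩⟩)
    · have h' : e t < e s := lt_of_le_of_ne h (fun hh => hst (he hh.symm))
      exact hxs.2 (mem_iUnion.2 ⟨t, mem_iUnion.2 ⟨h', hxt.1⟩⟩)
  have hVcover : ∀ x, x ∈ ⋃ t, U t → ∃ t, x ∈ V t := by
    intro x hx
    rcases mem_iUnion.1 hx with ⟨t0, ht0⟩
    have hne : ∃ k : ℕ, ∃ s, e s = k ∧ x ∈ U s := ⟨e t0, t0, rfl, ht0⟩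
    obtain ⟨s, hsk, hxs⟩ := Nat.find_spec hne
    refine ⟨s, hxs, ?_⟩
    intro hmem
    rcases mem_iUnion.1 hmem with ⟨u, hu⟩
    rcases mem_iUnion.1 hu with ⟨hlt, hxu⟩
    have : e u < Nat.find hne := by omega
    exact Nat.find_min hne this ⟨u, rfl, hxu⟩
  -- the finite set of indices meeting the support of g
  set F : Finset Γ := hFfin.toFinset with hFdef
  have hFmem : ∀ t, t ∈ F ↔ (Function.support g ∩ U t).Nonempty := fun t =>
    hFfin.mem_toFinset
  have hgzero : ∀ t, t ∉ F → ∀ x ∈ U t, g x = 0 := by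
    intro t ht x hx
    by_contra hgx
    exact ht ((hFmem t).2 ⟨x, hgx, hx⟩)
  have hpzero : ∀ t, t ∉ F → (V t).indicator g = 0 := by
    intro t ht
    funext x
    by_cases hx : x ∈ V t
    · rw [indicator_of_mem hx]
      exact hgzero t ht x (hVsub t hx)
    · rw [indicator_of_notMem hx]; rfl
  have hpint : ∀ t, Integrable ((V t).indicator g) volume := by
    intro t
    rw [integrable_indicator_iff (hVmeas t)]
    exact hg.mono_set ((hVsub t).trans (hUΩ t))
  -- chains and the finite tree skeleton E
  have hfix : ∀ k, parent^[k] a = a := fun k => Function.iterate_fixed hroot k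
  have hchainfin : ∀ s, (Set.range fun k => parent^[k] s).Finite := by
    intro s
    obtain ⟨k0, hk0⟩ := htree s
    apply Set.Finite.subset ((Set.finite_Iic k0).image fun k => parent^[k] s)
    rintro x ⟨k, rfl⟩
    by_cases hk : k ≤ k0
    · exact ⟨k, hk, rfl⟩
    · refine ⟨k0, Set.mem_Iic.2 (le_refl _), ?_⟩
      show parent^[k0] s = parent^[k] s
      rw [hk0, show k = (k - k0) + k0 by omega, Function.iterate_add_apply, hk0, hfix]
  have hEfin : (⋃ s ∈ (F : Set Γ), Set.range fun k => parent^[k] s).Finite :=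
    Set.Finite.biUnion (F.finite_toSet) (fun s _ => hchainfin s)
  set Efin : Finset Γ := hEfin.toFinset with hEdef
  have hEmem : ∀ u, u ∈ Efin ↔ ∃ s ∈ F, ∃ k : ℕ, parent^[k] s = u := by
    intro u
    rw [hEdef, Set.Finite.mem_toFinset]
    simp only [Set.mem_iUnion, Set.mem_range, Finset.mem_coe]
    constructor
    · rintro ⟨s, hs, k, hk⟩; exact ⟨s, hs, k, hk⟩
    · rintro ⟨s, hs, k, hk⟩; exact ⟨s, hs, k, hk⟩
  have hFE : ∀ s ∈ F, s ∈ Efin := fun s hs => (hEmem s).2 ⟨s, hs, 0, rfl⟩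
  have hEparent : ∀ u ∈ Efin, parent u ∈ Efin := by
    intro u hu
    obtain ⟨s, hs, k, hk⟩ := (hEmem u).1 hu
    exact (hEmem (parent u)).2 ⟨s, hs, k + 1, by rw [Function.iterate_succ_apply', hk]⟩
  -- masses
  set I : Γ → ℝ := fun s => ∫ x, (V s).indicator g x with hIdef
  set D : Γ → Finset Γ := fun t => F.filter fun s => ∃ k : ℕ, parent^[k] s = t with hDdef
  set c : Γ → ℝ := fun t => ∑ s ∈ D t, I s with hcdef
  have hIzero : ∀ t, t ∉ F → I t = 0 := by
    intro t ht
    rw [hIdef]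
    simp only
    rw [hpzero t ht]
    simp
  have hczero : ∀ t, t ∉ Efin → c t = 0 := by
    intro t ht
    rw [hcdef]
    simp only
    rw [Finset.sum_eq_zero]
    intro s hs
    rw [hDdef] at hs
    simp only [Finset.mem_filter] at hs
    obtain ⟨hsF, k, hk⟩ := hs
    exact absurd ((hEmem t).2 ⟨s, hsF, k, hk⟩) ht
  -- the key recursive decomposition of D t
  have hchild : ∀ t, (D t).filter (fun s => ¬ s = t)
      = (Efin.filter fun u => parent u = t ∧ u ≠ a).biUnion D := by
    intro t
    ext s
    simp only [Finset.mem_filter, Finset.mem_biUnion, hDdef]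
    constructor
    · rintro ⟨⟨hsF, k, hk⟩, hst⟩
      have hex : ∃ k : ℕ, parent^[k] s = t := ⟨k, hk⟩
      have hk0 : parent^[Nat.find hex] s = t := Nat.find_spec hex
      have hk0pos : Nat.find hex ≠ 0 := by
        intro h
        rw [h] at hk0
        exact hst hk0
      obtain ⟨k1, hk1⟩ : ∃ k1, Nat.find hex = k1 + 1 := ⟨Nat.find hex - 1, by omega⟩
      refine ⟨parent^[k1] s, ⟨(hEmem _).2 ⟨s, hsF, k1, rfl⟩, ?_, ?_⟩, hsF, k1, rfl⟩
      · have h5 : parent^[k1 + 1] s = t := by rw [← hk1]; exact hk0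
        rw [Function.iterate_succ_apply'] at h5
        exact h5
      · intro hua
        have : parent^[k1] s = t := by
          rw [hua, ← hfix 1]
          rw [hk1, Function.iterate_succ_apply'] at hk0
          rw [hua] at hk0
          simp only [Function.iterate_one]
          rw [hk0]
        exact Nat.find_min hex (by omega) this
    · rintro ⟨u, ⟨huE, hup, hua⟩, hsF, j, hj⟩
      refine ⟨⟨hsF, j + 1, by rw [Function.iterate_succ_apply', hj, hup]⟩, ?_⟩
      intro hst
      subst hst
      have hcyc : parent^[j + 1] s = s := by rw [Function.iterate_succ_apply', hj, hup]
      obtain ⟨kk, hkk⟩ := htree s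
      have hsa : s = a := tc_nocycle parent a hroot kk hkk hcyc
      apply hua
      rw [hsa] at hj
      rw [← hj, hfix]
  have hDdisj : ∀ t, ∀ u ∈ Efin.filter (fun u => parent u = t ∧ u ≠ a),
      ∀ v ∈ Efin.filter (fun u => parent u = t ∧ u ≠ a), u ≠ v → Disjoint (D u) (D v) := by
    intro t u hu v hv huv
    simp only [Finset.mem_filter] at hu hv
    rw [Finset.disjoint_left]
    rintro s hsu hsv
    simp only [hDdef, Finset.mem_filter] at hsu hsv
    obtain ⟨hsF, j, hj⟩ := hsu
    obtain ⟨-, j', hj'⟩ := hsv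
    have haux : ∀ (u v : Γ), parent u = t → parent v = t → v ≠ a →
        ∀ (j j' : ℕ), j ≤ j' → parent^[j] s = u → parent^[j'] s = v → u = v := by
      intro u v hpu hpv hva j j' hle hju hjv
      rcases Nat.eq_or_lt_of_le hle with h | h
      · rw [← hju, ← hjv, h]
      · exfalso
        have hv1 : v = parent^[j' - j - 1] t := by
          have hsplit : parent^[j'] s = parent^[j' - j - 1] (parent (parent^[j] s)) := by
            rw [← Function.iterate_succ_apply, ← Function.iterate_add_apply]
            congr 1
            omega
          rw [hju, hpu] at hsplit
          rw [← hjv, hsplit]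
        have hcyc : parent^[(j' - j - 1) + 1] t = t := by
          rw [Function.iterate_succ_apply', ← hv1, hpv]
        obtain ⟨kk, hkk⟩ := htree t
        have hta : t = a := tc_nocycle parent a hroot kk hkk hcyc
        apply hva
        rw [hv1, hta, hfix]
    rcases le_total j j' with h | h
    · exact huv (haux u v hu.2.1 hv.2.1 hv.2.2 j j' h hj hj')
    · exact huv ((haux v u hv.2.1 hu.2.1 hu.2.2 j' j h hj' hj).symm)
  have hkey : ∀ t, c t = I t + ∑ u ∈ Efin.filter (fun u => parent u = t ∧ u ≠ a), c u := by
    intro t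
    have h1 : c t = ∑ s ∈ (D t).filter (fun s => s = t), I s
        + ∑ s ∈ (D t).filter (fun s => ¬ s = t), I s := by
      rw [hcdef]
      exact (Finset.sum_filter_add_sum_filter_not (D t) (fun s => s = t) I).symm
    have h2 : ∑ s ∈ (D t).filter (fun s => s = t), I s = I t := by
      rw [Finset.filter_eq' (D t) t]
      by_cases ht : t ∈ D t
      · rw [if_pos ht, Finset.sum_singleton]
      · rw [if_neg ht, Finset.sum_empty]
        have htF : t ∉ F := by
          intro htF
          exact ht (by simp only [hDdef, Finset.mem_filter]; exact ⟨htF, 0, rfl⟩)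
        exact (hIzero t htF).symm
    have h3 : ∑ s ∈ (D t).filter (fun s => ¬ s = t), I s
        = ∑ u ∈ Efin.filter (fun u => parent u = t ∧ u ≠ a), c u := by
      rw [hchild t, Finset.sum_biUnion (hDdisj t)]
    rw [h1, h2, h3]
  -- total mass is zero
  have hΩmeas : MeasurableSet Ω := hΩopen.measurableSet
  have hae : (fun x => ∑ s ∈ F, (V s).indicator g x) =ᵐ[volume.restrict Ω] g := by
    have hsub : {x | ¬ (∑ s ∈ F, (V s).indicator g x) = g x} ⊆ (⋃ t, U t)ᶜ := by
      intro x hx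
      simp only [Set.mem_setOf_eq] at hx
      intro hxU
      apply hx
      obtain ⟨t, hxt⟩ := hVcover x hxU
      by_cases htF : t ∈ F
      · rw [Finset.sum_eq_single t]
        · exact indicator_of_mem hxt g
        · intro s hs hst
          rw [indicator_of_notMem]
          intro hxs
          exact hVdisj s t hst x hxs hxt
        · intro h; exact absurd htF h
      · have hgx : g x = 0 := hgzero t htF x (hVsub t hxt)
        rw [hgx]
        apply Finset.sum_eq_zero
        intro s hs
        rw [indicator_apply_eq_zero]
        intro hxs
        by_cases hst : s = t
        · exact hgx
        · exact (hVdisj s t hst x hxs hxt).elim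
    have hnull : (volume.restrict Ω) {x | ¬ (∑ s ∈ F, (V s).indicator g x) = g x} = 0 := by
      apply measure_mono_null hsub
      rw [Measure.restrict_apply (MeasurableSet.compl (MeasurableSet.iUnion fun t =>
        (hUopen t).measurableSet))]
      rw [Set.inter_comm, ← Set.diff_eq]
      exact hcover
    exact hnull
  have hsumI : ∑ s ∈ F, I s = 0 := by
    have h1 : ∑ s ∈ F, I s = ∫ x, ∑ s ∈ F, (V s).indicator g x :=
      (integral_finset_sum F (fun s _ => hpint s)).symm
    have h2 : ∫ x, ∑ s ∈ F, (V s).indicator g x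
        = ∫ x in Ω, ∑ s ∈ F, (V s).indicator g x := by
      symm
      apply setIntegral_eq_integral_of_forall_compl_eq_zero
      intro x hx
      apply Finset.sum_eq_zero
      intro s hs
      rw [indicator_apply_eq_zero]
      intro hxs
      exact absurd (hUΩ s (hVsub s hxs)) hx
    rw [h1, h2, integral_congr_ae hae, hg0]
  have hDa : D a = F := by
    rw [hDdef]
    apply Finset.filter_true_of_mem
    intro s _
    exact htree s
  have hca : c a = 0 := by
    rw [hcdef]
    simp only
    rw [hDa]
    exact hsumI
  -- bump functions
  have hBprop : ∀ u, u ≠ a → IsOpen (B u) ∧ (B u).Nonempty := by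
    intro u hu
    obtain ⟨cc, L, hL, hBu⟩ := hBcube u hu
    constructor
    · rw [hBu]
      have : {x : EuclideanSpace ℝ (Fin n) | ∀ i, |x i - cc i| < L / 2}
          = ⋂ i, (fun x : EuclideanSpace ℝ (Fin n) => x i) ⁻¹' (Metric.ball (cc i) (L / 2)) := by
        ext x
        simp [Real.dist_eq]
      rw [this]
      exact isOpen_iInter_of_finite fun i =>
        (Metric.isOpen_ball).preimage (EuclideanSpace.proj (𝕜 := ℝ) i).continuous
    · refine ⟨cc, ?_⟩
      rw [hBu]
      intro i
      simpa using by positivity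
  have hBmeas : ∀ u, u ≠ a → MeasurableSet (B u) := fun u hu =>
    (hBprop u hu).1.measurableSet
  have hBpos : ∀ u, u ≠ a → 0 < volume (B u) := fun u hu =>
    (hBprop u hu).1.measure_pos volume (hBprop u hu).2
  have hBlt : ∀ u, u ≠ a → volume (B u) < ⊤ := by
    intro u hu
    exact (hΩbdd.subset (((hBsub u hu).trans inter_subset_left).trans (hUΩ u))).measure_lt_top
  set bump : Γ → EuclideanSpace ℝ (Fin n) → ℝ :=
    fun u x => ((volume (B u)).toReal)⁻¹ * (B u).indicator (fun _ => (1 : ℝ)) x with hbumpdef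
  have hbumpint : ∀ u, u ≠ a → Integrable (bump u) volume := by
    intro u hu
    apply Integrable.const_mul
    rw [integrable_indicator_iff (hBmeas u hu)]
    exact integrableOn_const (hBlt u hu).ne
  have hbumpI : ∀ u, u ≠ a → ∫ x, bump u x = 1 := by
    intro u hu
    rw [hbumpdef]
    simp only
    rw [integral_const_mul, integral_indicator_const (1 : ℝ) (hBmeas u hu)]
    simp only [smul_eq_mul, mul_one, measureReal_def]
    rw [inv_mul_cancel₀]
    exact ENNReal.toReal_ne_zero.2 ⟨(hBpos u hu).ne', (hBlt u hu).ne⟩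
  have hbumpsupp : ∀ u, Function.support (bump u) ⊆ B u := by
    intro u x hx
    by_contra hxB
    apply hx
    rw [hbumpdef]
    simp only
    rw [indicator_of_notMem hxB, mul_zero]
  set m : Γ → EuclideanSpace ℝ (Fin n) → ℝ :=
    fun u => if u = a then 0 else fun x => c u * bump u x with hmdef
  have hmint : ∀ u, Integrable (m u) volume := by
    intro u
    rw [hmdef]
    by_cases hu : u = a
    · simp only [if_pos hu]
      exact integrable_zero _ _ _
    · simp only [if_neg hu]
      exact (hbumpint u hu).const_mul (c u)
  have hmI : ∀ u, ∫ x, m u x = if u = a then 0 else c u := by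
    intro u
    rw [hmdef]
    by_cases hu : u = a
    · simp [hu]
    · simp only [if_neg hu]
      rw [integral_const_mul, hbumpI u hu, mul_one]
  have hmsupp : ∀ u, u ≠ a → Function.support (m u) ⊆ U u ∩ U (parent u) := by
    intro u hu x hx
    apply hBsub u hu
    apply hbumpsupp u
    intro hb
    apply hx
    rw [hmdef]
    simp only [if_neg hu]
    rw [hb, mul_zero]
  have hmzero : ∀ u, u ∉ Efin → m u = 0 := by
    intro u hu
    rw [hmdef]
    by_cases hua : u = a
    · simp [hua]
    · simp only [if_neg hua]
      funext x
      rw [hczero u hu, zero_mul]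
      rfl
  -- the decomposition
  set gt : Γ → EuclideanSpace ℝ (Fin n) → ℝ :=
    fun t x => (V t).indicator g x
      + (∑ u ∈ Efin, if parent u = t then m u x else 0) - m t x with hgtdef
  have hgtzero : ∀ t, t ∉ Efin → gt t = 0 := by
    intro t ht
    funext x
    rw [hgtdef]
    simp only
    have h1 : (V t).indicator g x = 0 := by
      rw [hpzero t (fun h => ht (hFE t h))]; rfl
    have h2 : (∑ u ∈ Efin, if parent u = t then m u x else 0) = 0 := by
      apply Finset.sum_eq_zero
      intro u hu
      rw [if_neg]
      intro hp
      exact ht (hp ▸ hEparent u hu)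
    have h3 : m t x = 0 := by rw [hmzero t ht]; rfl
    rw [h1, h2, h3]
    simp
  have hgtsupp : ∀ t, Function.support (gt t) ⊆ U t := by
    intro t x hx
    by_contra hxU
    apply hx
    rw [hgtdef]
    simp only
    have h1 : (V t).indicator g x = 0 := indicator_of_notMem (fun h => hxU (hVsub t h)) g
    have h2 : (∑ u ∈ Efin, if parent u = t then m u x else 0) = 0 := by
      apply Finset.sum_eq_zero
      intro u _
      by_cases hp : parent u = t
      · rw [if_pos hp]
        by_cases hua : u = a
        · rw [hmdef]; simp [hua]
        · by_contra hmx
          exact hxU (hp ▸ (hmsupp u hua (Function.mem_support.2 hmx)).2)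
      · rw [if_neg hp]
    have h3 : m t x = 0 := by
      by_cases hta : t = a
      · rw [hmdef]; simp [hta]
      · by_contra hmx
        exact hxU ((hmsupp t hta (Function.mem_support.2 hmx)).1)
    rw [h1, h2, h3]
    ring
  have hgtint : ∀ t, Integrable (gt t) volume := by
    intro t
    have hsum : Integrable (fun x => ∑ u ∈ Efin, if parent u = t then m u x else 0) volume := by
      apply integrable_finset_sum
      intro u _
      by_cases hp : parent u = t
      · simpa only [if_pos hp] using hmint u
      · simp only [if_neg hp]
        exact integrable_zero _ _ _
    exact ((hpint t).add hsum).sub (hmint t)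
  refine ⟨gt, ?_, ?_, ?_, hgtsupp, ?_⟩
  · -- finiteness
    apply Set.Finite.subset hEfin.toFinset.finite_toSet
    intro t ht
    by_contra htE
    exact ht (hgtzero t htE)
  · -- integrability on Ω
    exact fun t => (hgtint t).integrableOn
  · -- a.e. identity
    have htsum : ∀ x, ∑' t, gt t x = ∑ t ∈ Efin, gt t x := by
      intro x
      apply tsum_eq_sum
      intro t ht
      rw [hgtzero t ht]
      rfl
    have hcancel : ∀ x, ∑ t ∈ Efin, gt t x = ∑ t ∈ Efin, (V t).indicator g x := by
      intro x
      rw [hgtdef]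
      simp only
      rw [Finset.sum_sub_distrib, Finset.sum_add_distrib]
      have h1 : ∑ t ∈ Efin, ∑ u ∈ Efin, (if parent u = t then m u x else 0)
          = ∑ u ∈ Efin, m u x := by
        rw [Finset.sum_comm]
        apply Finset.sum_congr rfl
        intro u hu
        rw [Finset.sum_ite_eq Efin (parent u) (fun _ => m u x), if_pos (hEparent u hu)]
      rw [h1]
      ring
    have hFsum : ∀ x, ∑ t ∈ Efin, (V t).indicator g x = ∑ t ∈ F, (V t).indicator g x := by
      intro x
      symm
      apply Finset.sum_subset hFE
      intro t _ htF
      rw [hpzero t htF]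
      rfl
    filter_upwards [hae] with x hx
    rw [htsum x, hcancel x, hFsum x, hx]
  · -- integrals vanish
    intro t
    have hstep1 : ∫ x in U t, gt t x = ∫ x, gt t x := by
      apply setIntegral_eq_integral_of_forall_compl_eq_zero
      intro x hx
      by_contra hgx
      exact hx (hgtsupp t (Function.mem_support.2 hgx))
    have hsumint : Integrable (fun x => ∑ u ∈ Efin, if parent u = t then m u x else 0) volume := by
      apply integrable_finset_sum
      intro u _
      by_cases hp : parent u = t
      · simpa only [if_pos hp] using hmint u
      · simp only [if_neg hp]
        exact integrable_zero _ _ _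
    have hintsum : (∫ x, ∑ u ∈ Efin, if parent u = t then m u x else 0)
        = ∑ u ∈ Efin, if parent u = t then (if u = a then 0 else c u) else 0 := by
      rw [integral_finset_sum]
      · apply Finset.sum_congr rfl
        intro u _
        by_cases hp : parent u = t
        · simp only [if_pos hp]
          exact hmI u
        · simp only [if_neg hp, integral_zero]
      · intro u _
        by_cases hp : parent u = t
        · simpa only [if_pos hp] using hmint u
        · simp only [if_neg hp]
          exact integrable_zero _ _ _
    have hint1 : Integrable (fun x => (V t).indicator g x
        + ∑ u ∈ Efin, if parent u = t then m u x else 0) volume :=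
      (hpint t).add hsumint
    have hstep2 : ∫ x, gt t x = I t
        + (∑ u ∈ Efin, if parent u = t then (if u = a then 0 else c u) else 0)
        - (if t = a then 0 else c t) := by
      have e1 : (∫ x, gt t x)
          = (∫ x, (V t).indicator g x + ∑ u ∈ Efin, if parent u = t then m u x else 0)
            - ∫ x, m t x :=
        integral_sub hint1 (hmint t)
      have e2 : (∫ x, (V t).indicator g x + ∑ u ∈ Efin, if parent u = t then m u x else 0)
          = (∫ x, (V t).indicator g x)
            + ∫ x, ∑ u ∈ Efin, if parent u = t then m u x else 0 :=
        integral_add (hpint t) hsumint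
      rw [e1, e2, hintsum, hmI t]
    have hsum_eq : (∑ u ∈ Efin, if parent u = t then (if u = a then 0 else c u) else 0)
        = ∑ u ∈ Efin.filter (fun u => parent u = t ∧ u ≠ a), c u := by
      rw [Finset.sum_filter]
      apply Finset.sum_congr rfl
      intro u _
      by_cases hp : parent u = t
      · by_cases hua : u = a
        · simp [hp, hua]
        · simp [hp, hua]
      · simp [hp]
    rw [hstep1, hstep2, hsum_eq]
    by_cases hta : t = a
    · rw [if_pos hta, hta, ← hkey a, hca]
      ring
    · rw [if_neg hta]
      have := hkey t
      linarith
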